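/- Let h₃(ℝ) be the Heisenberg Lie algebra, i.e. the real Lie algebra of strictly upper triangular 3×3 real matrices (matrices M with M i j = 0 whenever j ≤ i), with the commutator bracket. Then there is no involutive Lie algebra automorphism θ of h₃(ℝ) (θ ∘ θ = id) whose (−1)-eigenspace {x : θ(x) = −x} is one-dimensional. -/

import Mathlib

/-- Auxiliary fact: the product of two strictly upper triangular `3 × 3` matrices is
strictly upper triangular. -/
theorem mul_strictlyUpper {a b : Matrix (Fin 3) (Fin 3) ℝ}
    (ha : ∀ i j, j ≤ i → a i j = 0) (hb : ∀ i j, j ≤ i → b i j = 0) :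
    ∀ i j, j ≤ i → (a * b) i j = 0 := by
  intro i j hij
  rw [Matrix.mul_apply]
  apply Finset.sum_eq_zero
  intro k _
  rcases le_or_gt k i with h | h
  · rw [ha i k h, zero_mul]
  · rw [hb k j (hij.trans h.le), mul_zero]

attribute [local instance 100] LieRing.ofAssociativeRing

/-- The 3-dimensional Heisenberg Lie algebra `h₃(ℝ)`: strictly upper triangular `3 × 3`
real matrices with the commutator bracket. -/
def heisenberg : LieSubalgebra ℝ (Matrix (Fin 3) (Fin 3) ℝ) where
  carrier := {M | ∀ i j : Fin 3, j ≤ i → M i j = 0}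
  zero_mem' := fun i j _ => rfl
  add_mem' := by
    intro a b ha hb i j hij
    show a i j + b i j = 0
    rw [ha i j hij, hb i j hij, add_zero]
  smul_mem' := by
    intro c a ha i j hij
    show c * a i j = 0
    rw [ha i j hij, mul_zero]
  lie_mem' := by
    intro a b ha hb i j hij
    show ⁅a, b⁆ i j = 0
    rw [Ring.lie_def]
    show (a * b) i j - (b * a) i j = 0
    rw [mul_strictlyUpper ha hb i j hij, mul_strictlyUpper hb ha i j hij, sub_zero]

namespace H3aux

def coX (m : heisenberg) : ℝ := (m : Matrix (Fin 3) (Fin 3) ℝ) 0 1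
def coY (m : heisenberg) : ℝ := (m : Matrix (Fin 3) (Fin 3) ℝ) 1 2
def coZ (m : heisenberg) : ℝ := (m : Matrix (Fin 3) (Fin 3) ℝ) 0 2

def E1 : heisenberg := ⟨!![0,1,0;0,0,0;0,0,0], by
  intro i j h; fin_cases i <;> fin_cases j <;> first | rfl | exact absurd h (by decide)⟩
def E2 : heisenberg := ⟨!![0,0,0;0,0,1;0,0,0], by
  intro i j h; fin_cases i <;> fin_cases j <;> first | rfl | exact absurd h (by decide)⟩
def E3 : heisenberg := ⟨!![0,0,1;0,0,0;0,0,0], by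
  intro i j h; fin_cases i <;> fin_cases j <;> first | rfl | exact absurd h (by decide)⟩

lemma coe_repr (m : heisenberg) :
    (m : Matrix (Fin 3) (Fin 3) ℝ) = !![0, coX m, coZ m; 0, 0, coY m; 0, 0, 0] := by
  ext i j
  fin_cases i <;> fin_cases j <;>
    first
      | exact m.2 _ _ (by decide)
      | simp [coX, coY, coZ]

@[simp] lemma coe_smul' (c : ℝ) (m : heisenberg) :
    ((c • m : heisenberg) : Matrix (Fin 3) (Fin 3) ℝ) = c • (m : Matrix (Fin 3) (Fin 3) ℝ) := rfl

@[simp] lemma coe_add' (a b : heisenberg) :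
    ((a + b : heisenberg) : Matrix (Fin 3) (Fin 3) ℝ) = (a : Matrix (Fin 3) (Fin 3) ℝ) + b := rfl

@[simp] lemma coe_neg' (a : heisenberg) :
    ((-a : heisenberg) : Matrix (Fin 3) (Fin 3) ℝ) = -(a : Matrix (Fin 3) (Fin 3) ℝ) := rfl

@[simp] lemma coe_sub' (a b : heisenberg) :
    ((a - b : heisenberg) : Matrix (Fin 3) (Fin 3) ℝ) = (a : Matrix (Fin 3) (Fin 3) ℝ) - b := rfl

lemma brkt (a b : heisenberg) : ⁅a, b⁆ = (coX a * coY b - coY a * coX b) • E3 := by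
  apply Subtype.ext
  show ⁅(a : Matrix (Fin 3) (Fin 3) ℝ), (b : Matrix (Fin 3) (Fin 3) ℝ)⁆ = _
  rw [Ring.lie_def, coe_repr a, coe_repr b]
  ext i j
  fin_cases i <;> fin_cases j <;>
      (try simp [Matrix.mul_apply, Fin.sum_univ_three, E3, SetLike.val_smul,
        SetLike.mk_smul_mk, Matrix.smul_apply, smul_eq_mul])
  any_goals ring

@[simp] lemma coX_add (a b : heisenberg) : coX (a + b) = coX a + coX b := rfl
@[simp] lemma coY_add (a b : heisenberg) : coY (a + b) = coY a + coY b := rfl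
@[simp] lemma coZ_add (a b : heisenberg) : coZ (a + b) = coZ a + coZ b := rfl
@[simp] lemma coX_sub (a b : heisenberg) : coX (a - b) = coX a - coX b := rfl
@[simp] lemma coY_sub (a b : heisenberg) : coY (a - b) = coY a - coY b := rfl
@[simp] lemma coZ_sub (a b : heisenberg) : coZ (a - b) = coZ a - coZ b := rfl
@[simp] lemma coX_neg (a : heisenberg) : coX (-a) = -coX a := rfl
@[simp] lemma coY_neg (a : heisenberg) : coY (-a) = -coY a := rfl
@[simp] lemma coZ_neg (a : heisenberg) : coZ (-a) = -coZ a := rfl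
@[simp] lemma coX_smul (c : ℝ) (a : heisenberg) : coX (c • a) = c * coX a := rfl
@[simp] lemma coY_smul (c : ℝ) (a : heisenberg) : coY (c • a) = c * coY a := rfl
@[simp] lemma coZ_smul (c : ℝ) (a : heisenberg) : coZ (c • a) = c * coZ a := rfl
@[simp] lemma coX_zero : coX 0 = 0 := rfl
@[simp] lemma coY_zero : coY 0 = 0 := rfl
@[simp] lemma coZ_zero : coZ 0 = 0 := rfl
@[simp] lemma coX_E1 : coX E1 = 1 := rfl
@[simp] lemma coY_E1 : coY E1 = 0 := rfl
@[simp] lemma coZ_E1 : coZ E1 = 0 := rfl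
@[simp] lemma coX_E2 : coX E2 = 0 := rfl
@[simp] lemma coY_E2 : coY E2 = 1 := rfl
@[simp] lemma coZ_E2 : coZ E2 = 0 := rfl
@[simp] lemma coX_E3 : coX E3 = 0 := rfl
@[simp] lemma coY_E3 : coY E3 = 0 := rfl
@[simp] lemma coZ_E3 : coZ E3 = 1 := rfl

lemma h_ext {a b : heisenberg} (hx : coX a = coX b) (hy : coY a = coY b)
    (hz : coZ a = coZ b) : a = b := by
  apply Subtype.ext
  rw [coe_repr a, coe_repr b, hx, hy, hz]

lemma E3_ne : E3 ≠ 0 := by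
  intro h
  have := congrArg coZ h
  simpa using this

end H3aux

open H3aux

/-- The Heisenberg Lie algebra `h₃(ℝ)` admits no involutive Lie algebra
automorphism whose `(-1)`-eigenspace is one-dimensional. -/
theorem heisenberg_no_involution_with_one_dimensional_neg_eigenspace :
    ¬ ∃ θ : ↥heisenberg →ₗ⁅ℝ⁆ ↥heisenberg,
        (∀ x, θ (θ x) = x) ∧
        Module.finrank ℝ
          ↥(LinearMap.ker (θ.toLinearMap + LinearMap.id)) = 1 := by
  rintro ⟨θ, hinv, hdim⟩
  obtain ⟨v, hv0, hvspan⟩ := finrank_eq_one_iff'.mp hdim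
  set V : heisenberg := (v : heisenberg) with hVdef
  have hVne : V ≠ 0 := fun h => hv0 (Subtype.ext h)
  have hθV : θ V = -V := by
    have h := v.2
    rw [LinearMap.mem_ker, LinearMap.add_apply] at h
    simp only [LieHom.coe_toLinearMap, LinearMap.id_apply] at h
    exact eq_neg_of_add_eq_zero_left h
  have hspan : ∀ x : heisenberg, θ x = -x → ∃ t : ℝ, x = t • V := by
    intro x hx
    have hm : x ∈ LinearMap.ker (θ.toLinearMap + LinearMap.id) := by
      rw [LinearMap.mem_ker, LinearMap.add_apply]
      simp only [LieHom.coe_toLinearMap, LinearMap.id_apply, hx]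
      abel
    obtain ⟨c, hc⟩ := hvspan ⟨x, hm⟩
    refine ⟨c, ?_⟩
    have := congrArg Subtype.val hc
    simpa using this.symm
  have h12 : ⁅E1, E2⁆ = E3 := by rw [brkt]; simp
  set l : ℝ := coX (θ E1) * coY (θ E2) - coY (θ E1) * coX (θ E2) with hl
  have hθ3 : θ E3 = l • E3 := by
    conv_lhs => rw [← h12, LieHom.map_lie, brkt]
  have hl2 : l * l = 1 := by
    have h := hinv E3
    rw [hθ3, map_smul, hθ3, smul_smul] at h
    have := congrArg coZ h
    simpa using this
  have hline : ∀ x : heisenberg, ∃ t : ℝ, x - θ x = t • V := by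
    intro x
    apply hspan
    rw [map_sub, hinv x]
    abel
  obtain ⟨t1, ht1⟩ := hline E1
  obtain ⟨t2, ht2⟩ := hline E2
  have hθE1 : θ E1 = E1 - t1 • V := by rw [← ht1]; abel
  have hθE2 : θ E2 = E2 - t2 • V := by rw [← ht2]; abel
  rcases mul_self_eq_one_iff.mp hl2 with hl1 | hlm1
  · -- l = 1
    have key : ∀ x : heisenberg, ∀ t : ℝ, θ x = x - t • V →
        coX V * coY x - coY V * coX x =
          -(coX V * (coY x - t * coY V) - coY V * (coX x - t * coX V)) := by
      intro x t hx
      have hb := θ.map_lie V x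
      rw [brkt V x, map_smul, hθ3, brkt (θ V) (θ x), hθV, hx] at hb
      have := congrArg coZ hb
      simp only [coZ_smul, coZ_E3, mul_one, coX_neg, coY_neg, coX_sub, coY_sub,
        coX_smul, coY_smul, hl1] at this
      linear_combination this
    have hY : coY V = 0 := by
      have h := key E1 t1 hθE1
      simp only [coX_E1, coY_E1] at h
      linear_combination (-1/2 : ℝ) * h
    have hX : coX V = 0 := by
      have h := key E2 t2 hθE2
      simp only [coX_E2, coY_E2] at h
      linear_combination (1/2 : ℝ) * h
    have hVE3 : V = coZ V • E3 := by
      apply h_ext <;> simp [hX, hY]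
    have hθVfix : θ V = V := by
      rw [hVE3, map_smul, hθ3, hl1, one_smul]
    have : coZ V = 0 := by
      have h := hθVfix.symm.trans hθV
      have := congrArg coZ h
      simp only [coZ_neg] at this
      linarith
    exact hVne (by rw [hVE3, this, zero_smul])
  · -- l = -1
    have hE3V : ∃ c : ℝ, E3 = c • V := by
      apply hspan
      rw [hθ3, hlm1]
      simp
    obtain ⟨c, hc⟩ := hE3V
    have h1 : (1:ℝ) = c * coZ V := by
      have := congrArg coZ hc; simpa using this
    have hX : c * coX V = 0 := by
      have := congrArg coX hc; simpa using this.symm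
    have hY : c * coY V = 0 := by
      have := congrArg coY hc; simpa using this.symm
    have hcne : c ≠ 0 := by
      intro h; rw [h, zero_mul] at h1; exact one_ne_zero h1
    have hXV : coX V = 0 := by
      rcases mul_eq_zero.mp hX with h | h
      · exact absurd h hcne
      · exact h
    have hYV : coY V = 0 := by
      rcases mul_eq_zero.mp hY with h | h
      · exact absurd h hcne
      · exact h
    have : l = 1 := by
      rw [hl, hθE1, hθE2]
      simp [hXV, hYV]
    rw [hlm1] at this
    norm_num at this
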